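/- Let n ≥ 4, let p_1, ..., p_n be distinct complex numbers, and let α_1, ..., α_n be complex numbers satisfying the linear relations (p_{n−1} − p_n)α_k − (p_k − p_n)α_{n−1} + (p_k − p_{n−1})α_n = 0 for k = 1, ..., n−2. Let E_{ℓ,i} denote the ℓ-th elementary symmetric polynomial in p_1, ..., p_n with p_i omitted, let Δ = ∏_{1≤i<j≤n}(p_i − p_j), and let M_ℓ be the n×n matrix whose first row is (E_{ℓ,1}α_1, ..., E_{ℓ,n}α_n) and whose remaining rows are (p_1^{n−2},...,p_n^{n−2}), ..., (p_1,...,p_n), (1,...,1). Then (−1)^n det(M_ℓ)/Δ equals (p_n α_{n−1} − p_{n−1} α_n)/(p_{n−1} − p_n) if ℓ = n−1, equals (α_{n−1} − α_n)/(p_{n−1} − p_n) if ℓ = n−2, and equals 0 if ℓ < n−2. -/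

import Mathlib

open Finset Matrix

noncomputable def eP (p : ℕ → ℂ) (s : Finset ℕ) (t : ℕ) : ℂ :=
  ∑ S ∈ s.powersetCard t, ∏ j ∈ S, p j

lemma eP_zero (p : ℕ → ℂ) (s : Finset ℕ) : eP p s 0 = 1 := by simp [eP]

lemma eP_of_card_lt (p : ℕ → ℂ) {s : Finset ℕ} {t : ℕ} (h : s.card < t) : eP p s t = 0 := by
  simp [eP, Finset.powersetCard_eq_empty.2 h]

lemma eP_insert (p : ℕ → ℂ) {k : ℕ} {s : Finset ℕ} (h : k ∉ s) (t : ℕ) :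
    eP p (insert k s) (t + 1) = eP p s (t + 1) + p k * eP p s t := by
  unfold eP
  rw [Finset.powersetCard_succ_insert h, Finset.sum_union, Finset.sum_image]
  · congr 1
    rw [Finset.mul_sum]
    refine Finset.sum_congr rfl fun S hS => ?_
    exact Finset.prod_insert fun hk => h ((Finset.mem_powersetCard.1 hS).1 hk)
  · intro S hS T hT hST
    have hkS : k ∉ S := fun hk => h ((Finset.mem_powersetCard.1 hS).1 hk)
    have hkT : k ∉ T := fun hk => h ((Finset.mem_powersetCard.1 hT).1 hk)
    rw [← Finset.erase_insert hkS, ← Finset.erase_insert hkT, hST]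
  · rw [Finset.disjoint_left]
    intro S hS hS'
    obtain ⟨T, _, rfl⟩ := Finset.mem_image.1 hS'
    exact (fun hk => h ((Finset.mem_powersetCard.1 hS).1 hk)) (Finset.mem_insert_self k T)

lemma eP_erase (p : ℕ → ℂ) {s : Finset ℕ} {k : ℕ} (hk : k ∈ s) (t : ℕ) :
    eP p s (t + 1) = eP p (s.erase k) (t + 1) + p k * eP p (s.erase k) t := by
  conv_lhs => rw [← Finset.insert_erase hk]
  exact eP_insert p (Finset.notMem_erase k s) t

lemma E_expand (p : ℕ → ℂ) (s : Finset ℕ) {k : ℕ} (hk : k ∈ s) (l : ℕ) :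
    eP p (s.erase k) l = ∑ m ∈ Finset.range (l + 1), (-1) ^ m * eP p s (l - m) * p k ^ m := by
  induction l with
  | zero => simp [eP_zero]
  | succ l ih =>
    have h1 : eP p (s.erase k) (l + 1) = eP p s (l + 1) - p k * eP p (s.erase k) l := by
      rw [eP_erase p hk l]; ring
    rw [h1, ih, Finset.sum_range_succ' _ (l + 1)]
    simp only [Nat.succ_sub_succ, pow_zero, mul_one, one_mul, Nat.sub_zero]
    rw [Finset.mul_sum]
    have hz : ∑ x ∈ Finset.range (l + 1),
        ((-1 : ℂ) ^ (x + 1) * eP p s (l - x) * p k ^ (x + 1)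
          + p k * ((-1) ^ x * eP p s (l - x) * p k ^ x)) = 0 :=
      Finset.sum_eq_zero fun x _ => by ring
    rw [Finset.sum_add_distrib] at hz
    linear_combination -hz

lemma prod_sub_eq (p : ℕ → ℂ) (s : Finset ℕ) (x : ℂ) :
    ∏ i ∈ s, (x - p i) =
      ∑ t ∈ Finset.range (s.card + 1), (-1) ^ t * eP p s t * x ^ (s.card - t) := by
  classical
  induction s using Finset.induction_on with
  | empty => simp [eP_zero]
  | @insert a s ha ih =>
    rw [Finset.prod_insert ha, ih, Finset.card_insert_of_notMem ha]
    have e1 : ∀ t ∈ Finset.range (s.card + 1),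
        (x - p a) * ((-1 : ℂ) ^ t * eP p s t * x ^ (s.card - t)) =
          ((-1 : ℂ) ^ t * eP p s t * x ^ (s.card + 1 - t))
            + ((-1 : ℂ) ^ (t + 1) * (p a * eP p s t) * x ^ (s.card - t)) := by
      intro t ht
      have ht' : t ≤ s.card := Nat.lt_succ_iff.mp (Finset.mem_range.mp ht)
      have h2 : s.card + 1 - t = (s.card - t) + 1 := by omega
      rw [h2, pow_succ]
      ring
    rw [Finset.mul_sum, Finset.sum_congr rfl e1, Finset.sum_add_distrib,
      Finset.sum_range_succ' (fun t => (-1 : ℂ) ^ t * eP p s t * x ^ (s.card + 1 - t)) s.card,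
      Finset.sum_range_succ' (fun t => (-1 : ℂ) ^ t * eP p (insert a s) t * x ^ (s.card + 1 - t))
        (s.card + 1)]
    simp only [Nat.succ_sub_succ, pow_zero, one_mul, Nat.sub_zero, eP_zero, mul_one]
    have e2 : ∀ t ∈ Finset.range (s.card + 1),
        (-1 : ℂ) ^ (t + 1) * eP p (insert a s) (t + 1) * x ^ (s.card - t) =
          ((-1 : ℂ) ^ (t + 1) * eP p s (t + 1) * x ^ (s.card - t))
            + ((-1 : ℂ) ^ (t + 1) * (p a * eP p s t) * x ^ (s.card - t)) := by
      intro t _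
      rw [eP_insert p ha]
      ring
    rw [Finset.sum_congr rfl e2, Finset.sum_add_distrib,
      Finset.sum_range_succ (fun t => (-1 : ℂ) ^ (t + 1) * eP p s (t + 1) * x ^ (s.card - t))
        s.card]
    rw [eP_of_card_lt p (Nat.lt_succ_self s.card)]
    ring

lemma det_row_sum {n : ℕ} {ι : Type*} (A : Matrix (Fin n) (Fin n) ℂ) (r : Fin n)
    (s : Finset ι) (f : ι → Fin n → ℂ) :
    (A.updateRow r (∑ m ∈ s, f m)).det = ∑ m ∈ s, (A.updateRow r (f m)).det := by
  classical
  induction s using Finset.induction_on with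
  | empty =>
    rw [Finset.sum_empty, Finset.sum_empty]
    exact Matrix.det_eq_zero_of_row_eq_zero r (fun j => by simp)
  | @insert a s ha ih =>
    rw [Finset.sum_insert ha, Finset.sum_insert ha, Matrix.det_updateRow_add, ih]

theorem stmt_8 (n : ℕ) (hn : 4 ≤ n) (p α : ℕ → ℂ)
    (hp : ∀ i ∈ Finset.Icc 1 n, ∀ j ∈ Finset.Icc 1 n, i ≠ j → p i ≠ p j)
    (hrel : ∀ k ∈ Finset.Icc 1 (n-2),
      (p (n-1) - p n) * α k - (p k - p n) * α (n-1) + (p k - p (n-1)) * α n = 0)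
    (ℓ : ℕ) (hℓ : ℓ ≤ n - 1)
    (E : ℕ → ℂ)
    (hE : ∀ i, E i = ∑ S ∈ ((Finset.Icc 1 n).erase i).powersetCard ℓ, ∏ j ∈ S, p j)
    (Δ : ℂ) (hΔ : Δ = ∏ i ∈ Finset.Icc 1 n, ∏ j ∈ Finset.Ioc i n, (p i - p j))
    (M : Matrix (Fin n) (Fin n) ℂ)
    (hM : ∀ r c, M r c = if (r : ℕ) = 0 then E ((c : ℕ) + 1) * α ((c : ℕ) + 1)
      else p ((c : ℕ) + 1) ^ (n - 1 - (r : ℕ))) :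
    (ℓ = n - 1 → (-1 : ℂ)^n * M.det / Δ =
        (p n * α (n-1) - p (n-1) * α n) / (p (n-1) - p n)) ∧
    (ℓ = n - 2 → (-1 : ℂ)^n * M.det / Δ = (α (n-1) - α n) / (p (n-1) - p n)) ∧
    (ℓ < n - 2 → (-1 : ℂ)^n * M.det / Δ = 0) := by
  classical
  haveI : NeZero n := ⟨by omega⟩
  have hmem : ∀ k, 1 ≤ k → k ≤ n → k ∈ Finset.Icc 1 n := fun k h1 h2 => Finset.mem_Icc.2 ⟨h1, h2⟩
  have hq : p (n-1) - p n ≠ 0 :=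
    sub_ne_zero.2 (hp (n-1) (hmem _ (by omega) (by omega)) n (hmem _ (by omega) le_rfl) (by omega))
  set A := (α (n-1) - α n) / (p (n-1) - p n) with hA
  set B := (p (n-1) * α n - p n * α (n-1)) / (p (n-1) - p n) with hB
  have halpha : ∀ k, 1 ≤ k → k ≤ n → α k = A * p k + B := by
    intro k h1 h2
    rw [hA, hB, div_mul_eq_mul_div, ← add_div, eq_div_iff hq]
    by_cases hk : k ≤ n - 2
    · linear_combination (hrel k (Finset.mem_Icc.2 ⟨h1, hk⟩))
    · have hk2 : k = n - 1 ∨ k = n := by omega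
      rcases hk2 with hk2 | hk2 <;> rw [hk2] <;> ring
  -- Δ in Fin-indexed form
  have hΔfin : Δ = ∏ a : Fin n, ∏ b ∈ Finset.Ioi a, (p ((a:ℕ)+1) - p ((b:ℕ)+1)) := by
    rw [hΔ]
    have hIcc : Finset.Icc 1 n = Finset.image (fun a : Fin n => (a:ℕ)+1) Finset.univ := by
      ext x
      simp only [Finset.mem_Icc, Finset.mem_image, Finset.mem_univ, true_and]
      constructor
      · rintro ⟨h1, h2⟩
        exact ⟨⟨x-1, by omega⟩, by simp; omega⟩
      · rintro ⟨a, rfl⟩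
        exact ⟨by omega, by have := a.isLt; omega⟩
    rw [hIcc, Finset.prod_image (fun a _ b _ h => Fin.ext (by omega))]
    refine Finset.prod_congr rfl fun a _ => ?_
    have hIoc : Finset.Ioc ((a:ℕ)+1) n
        = Finset.image (fun b : Fin n => (b:ℕ)+1) (Finset.Ioi a) := by
      ext x
      simp only [Finset.mem_Ioc, Finset.mem_image, Finset.mem_Ioi]
      constructor
      · rintro ⟨h1, h2⟩
        refine ⟨⟨x-1, by omega⟩, ?_, by simp; omega⟩
        rw [Fin.lt_def]
        simp
        omega
      · rintro ⟨b, hb, rfl⟩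
        have hab : (a:ℕ) < (b:ℕ) := hb
        exact ⟨by omega, by have := b.isLt; omega⟩
    rw [hIoc, Finset.prod_image (fun x _ y _ h => Fin.ext (by omega))]
  have hΔne : Δ ≠ 0 := by
    rw [hΔfin]
    refine Finset.prod_ne_zero_iff.2 fun a _ => Finset.prod_ne_zero_iff.2 fun b hb => ?_
    have hab' : a < b := Finset.mem_Ioi.1 hb
    have hab : (a:ℕ) < (b:ℕ) := hab'
    exact sub_ne_zero.2 (hp _ (hmem _ (by omega) (by omega)) _ (hmem _ (by omega) (by omega))
      (by omega))
  set R : Matrix (Fin n) (Fin n) ℂ :=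
    Matrix.of (fun r c : Fin n => p ((c:ℕ)+1) ^ (n - 1 - (r:ℕ))) with hR
  have hdetR : R.det = Δ := by
    have h1 : R.det = (R.submatrix Fin.revPerm Fin.revPerm).det :=
      (Matrix.det_submatrix_equiv_self _ _).symm
    have h2 : R.submatrix Fin.revPerm Fin.revPerm
        = (Matrix.vandermonde fun i : Fin n => p (((Fin.rev i : Fin n) : ℕ) + 1))ᵀ := by
      ext r c
      simp only [Matrix.submatrix_apply, Matrix.transpose_apply, Matrix.vandermonde_apply,
        hR, Matrix.of_apply, Fin.revPerm_apply]
      congr 1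
      have hr := r.isLt
      rw [Fin.val_rev]
      omega
    rw [h1, h2, Matrix.det_transpose, Matrix.det_vandermonde, hΔfin]
    rw [Finset.prod_sigma', Finset.prod_sigma']
    refine Finset.prod_nbij' (fun z => ⟨Fin.rev z.2, Fin.rev z.1⟩)
      (fun z => ⟨Fin.rev z.2, Fin.rev z.1⟩) ?_ ?_ ?_ ?_ ?_
    · rintro ⟨i, j⟩ hz
      simp only [Finset.mem_sigma, Finset.mem_univ, Finset.mem_Ioi, true_and] at hz ⊢
      exact Fin.rev_lt_rev.2 hz
    · rintro ⟨i, j⟩ hz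
      simp only [Finset.mem_sigma, Finset.mem_univ, Finset.mem_Ioi, true_and] at hz ⊢
      exact Fin.rev_lt_rev.2 hz
    · rintro ⟨i, j⟩ _
      simp [Fin.rev_rev]
    · rintro ⟨i, j⟩ _
      simp [Fin.rev_rev]
    · rintro ⟨i, j⟩ _
      rfl
  set d : ℕ → ℂ := fun e => (R.updateRow 0 (fun c => p ((c:ℕ)+1) ^ e)).det with hd
  have hd0 : ∀ e, e ≤ n - 2 → d e = 0 := by
    intro e he
    rw [hd]
    have hr0 : (0 : Fin n) ≠ (⟨n - 1 - e, by omega⟩ : Fin n) := by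
      intro h
      have h2 := congrArg Fin.val h
      simp only [Fin.val_zero] at h2
      omega
    refine Matrix.det_zero_of_row_eq hr0 (funext fun c => ?_)
    rw [Matrix.updateRow_apply, Matrix.updateRow_apply, if_pos rfl, if_neg (Ne.symm hr0)]
    show p ((c:ℕ)+1) ^ e = R ⟨n - 1 - e, by omega⟩ c
    rw [hR]
    simp only [Matrix.of_apply]
    congr 1
    omega
  have hdn1 : d (n-1) = Δ := by
    have h1 : (fun c : Fin n => p ((c:ℕ)+1) ^ (n-1)) = R 0 := by
      funext c
      simp [hR]
    rw [hd]
    simp only [h1, Matrix.updateRow_eq_self]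
    exact hdetR
  have hdn : d n = eP p (Finset.Icc 1 n) 1 * Δ := by
    have hcard : (Finset.Icc 1 n).card = n := by rw [Nat.card_Icc]; omega
    have hrow : (fun c : Fin n => p ((c:ℕ)+1) ^ n)
        = ∑ u ∈ Finset.range n, fun c : Fin n =>
            (-1:ℂ)^u * eP p (Finset.Icc 1 n) (u+1) * p ((c:ℕ)+1) ^ (n-1-u) := by
      funext c
      rw [Finset.sum_apply]
      have h0 : ∏ i ∈ Finset.Icc 1 n, (p ((c:ℕ)+1) - p i) = 0 :=
        Finset.prod_eq_zero (hmem ((c:ℕ)+1) (by omega) (by have := c.isLt; omega)) (by ring)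
      have h1 := prod_sub_eq p (Finset.Icc 1 n) (p ((c:ℕ)+1))
      rw [h0, hcard, Finset.sum_range_succ' _ n] at h1
      simp only [pow_zero, one_mul, Nat.sub_zero, eP_zero, mul_one] at h1
      have h3 : ∀ u ∈ Finset.range n,
          (-1:ℂ)^(u+1) * eP p (Finset.Icc 1 n) (u+1) * p ((c:ℕ)+1) ^ (n-(u+1))
            = -((-1:ℂ)^u * eP p (Finset.Icc 1 n) (u+1) * p ((c:ℕ)+1) ^ (n-1-u)) := by
        intro u _
        have h4 : n - (u+1) = n - 1 - u := by omega
        rw [h4]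
        ring
      rw [Finset.sum_congr rfl h3] at h1
      rw [Finset.sum_neg_distrib] at h1
      linear_combination -h1
    rw [hd]
    simp only [hrow]
    rw [det_row_sum]
    have hterm : ∀ u ∈ Finset.range n,
        (R.updateRow 0 fun c : Fin n =>
          (-1:ℂ)^u * eP p (Finset.Icc 1 n) (u+1) * p ((c:ℕ)+1) ^ (n-1-u)).det
          = (-1:ℂ)^u * eP p (Finset.Icc 1 n) (u+1) * d (n-1-u) := by
      intro u _
      have hsm : (fun c : Fin n =>
          (-1:ℂ)^u * eP p (Finset.Icc 1 n) (u+1) * p ((c:ℕ)+1) ^ (n-1-u))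
          = ((-1:ℂ)^u * eP p (Finset.Icc 1 n) (u+1))
              • (fun c : Fin n => p ((c:ℕ)+1) ^ (n-1-u)) := rfl
      rw [hsm, Matrix.det_updateRow_smul]
    rw [Finset.sum_congr rfl hterm]
    rw [Finset.sum_eq_single 0 (fun u hu hu0 => by
        rw [hd0 (n-1-u) (by have := Finset.mem_range.1 hu; omega)]; ring)
      (fun h => absurd (Finset.mem_range.2 (by omega)) h)]
    rw [Nat.sub_zero, hdn1]
    ring
  have hdetM : M.det = ∑ m ∈ Finset.range (ℓ+1),
      ((-1:ℂ)^m * eP p (Finset.Icc 1 n) (ℓ-m) * A * d (m+1)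
        + (-1:ℂ)^m * eP p (Finset.Icc 1 n) (ℓ-m) * B * d m) := by
    have hM' : M = R.updateRow 0 (fun c => E ((c:ℕ)+1) * α ((c:ℕ)+1)) := by
      ext r c
      rw [hM]
      by_cases h : r = 0
      · subst h
        simp [Matrix.updateRow_self]
      · have h' : (r:ℕ) ≠ 0 := fun hh => h (Fin.ext (by simp [hh]))
        rw [Matrix.updateRow_apply, if_neg h, if_neg h']
        rw [hR]
        rfl
    have hrowM : (fun c : Fin n => E ((c:ℕ)+1) * α ((c:ℕ)+1))
        = ∑ m ∈ Finset.range (ℓ+1),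
            (((-1:ℂ)^m * eP p (Finset.Icc 1 n) (ℓ-m) * A)
                • (fun c : Fin n => p ((c:ℕ)+1) ^ (m+1))
              + ((-1:ℂ)^m * eP p (Finset.Icc 1 n) (ℓ-m) * B)
                • (fun c : Fin n => p ((c:ℕ)+1) ^ m)) := by
      funext c
      rw [Finset.sum_apply]
      simp only [Pi.add_apply, Pi.smul_apply, smul_eq_mul]
      have hEc : E ((c:ℕ)+1) = eP p ((Finset.Icc 1 n).erase ((c:ℕ)+1)) ℓ := hE _
      rw [hEc, E_expand p (Finset.Icc 1 n)
          (hmem _ (by omega) (by have := c.isLt; omega)) ℓ,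
        halpha ((c:ℕ)+1) (by omega) (by have := c.isLt; omega), Finset.sum_mul]
      refine Finset.sum_congr rfl fun m _ => ?_
      ring
    rw [hM', hrowM, det_row_sum]
    refine Finset.sum_congr rfl fun m _ => ?_
    rw [Matrix.det_updateRow_add, Matrix.det_updateRow_smul, Matrix.det_updateRow_smul]
  refine ⟨?_, ?_, ?_⟩
  · -- ℓ = n - 1
    intro hcase
    subst hcase
    have hdet : M.det = (-1:ℂ)^(n-1) * B * Δ := by
      rw [hdetM]
      have hsplit : n - 1 + 1 = (n-2) + 1 + 1 := by omega
      rw [hsplit, Finset.sum_range_succ, Finset.sum_range_succ]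
      have hz : ∑ m ∈ Finset.range (n-2),
          ((-1:ℂ)^m * eP p (Finset.Icc 1 n) (n-1-m) * A * d (m+1)
            + (-1:ℂ)^m * eP p (Finset.Icc 1 n) (n-1-m) * B * d m) = 0 := by
        refine Finset.sum_eq_zero fun m hm => ?_
        have hm' : m < n - 2 := Finset.mem_range.1 hm
        rw [hd0 m (by omega), hd0 (m+1) (by omega)]
        ring
      rw [hz]
      have h1 : n - 1 - (n - 2) = 1 := by omega
      have h2 : n - 1 - (n - 2 + 1) = 0 := by omega
      have h3 : n - 2 + 1 = n - 1 := by omega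
      have h4 : n - 1 + 1 = n := by omega
      rw [h1, h2, h3, h4, hdn1, hdn, hd0 (n-2) le_rfl, eP_zero]
      have hcancel : (-1:ℂ)^(n-2) + (-1:ℂ)^(n-1) = 0 := by
        have h5 : n - 1 = (n-2) + 1 := by omega
        rw [h5, pow_succ]
        ring
      linear_combination (eP p (Finset.Icc 1 n) 1 * A * Δ) * hcancel
    rw [hdet]
    have hsgn2 : (-1:ℂ)^n * (-1:ℂ)^(n-1) = -1 := by
      rw [← pow_add]
      have h6 : n + (n-1) = 2*(n-1)+1 := by omega
      rw [h6, pow_succ, pow_mul]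
      norm_num
    have hRB : (p n * α (n-1) - p (n-1) * α n) / (p (n-1) - p n) = -B := by
      rw [hB, ← neg_div, neg_sub]
    rw [hRB, div_eq_iff hΔne]
    linear_combination B * Δ * hsgn2
  · -- ℓ = n - 2
    intro hcase
    subst hcase
    have hdet : M.det = (-1:ℂ)^(n-2) * A * Δ := by
      rw [hdetM]
      rw [Finset.sum_range_succ]
      have hz : ∑ m ∈ Finset.range (n-2),
          ((-1:ℂ)^m * eP p (Finset.Icc 1 n) (n-2-m) * A * d (m+1)
            + (-1:ℂ)^m * eP p (Finset.Icc 1 n) (n-2-m) * B * d m) = 0 := by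
        refine Finset.sum_eq_zero fun m hm => ?_
        have hm' : m < n - 2 := Finset.mem_range.1 hm
        rw [hd0 m (by omega), hd0 (m+1) (by omega)]
        ring
      rw [hz]
      have h1 : n - 2 - (n - 2) = 0 := by omega
      have h3 : n - 2 + 1 = n - 1 := by omega
      rw [h1, h3, hdn1, hd0 (n-2) le_rfl, eP_zero]
      ring
    rw [hdet]
    have hsgn : (-1:ℂ)^n * (-1:ℂ)^(n-2) = 1 := by
      rw [← pow_add]
      have h6 : n + (n-2) = 2*(n-1) := by omega
      rw [h6, pow_mul]
      norm_num
    rw [div_eq_iff hΔne]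
    linear_combination A * Δ * hsgn
  · -- ℓ < n - 2
    intro hcase
    have hdet : M.det = 0 := by
      rw [hdetM]
      refine Finset.sum_eq_zero fun m hm => ?_
      have hm' : m < ℓ + 1 := Finset.mem_range.1 hm
      rw [hd0 m (by omega), hd0 (m+1) (by omega)]
      ring
    rw [hdet]
    simp
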